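/- arXiv:1003.2676 — 2 statements merged into one kernel-verified Lean document; each statement's English description precedes it below -/
import Mathlib

section
/- Let ι be a nonempty finite type and let A be an ι × ι matrix with real entries such that A i j ≥ 0 for all i, j, and A is irreducible in the sense that for all i, j there exists k ∈ ℕ with (A^k) i j > 0. Suppose x, y : ι → ℝ satisfy x i > 0 and y i > 0 for all i, and A·x = δ·x and A·y = δ'·y (matrix–vector multiplication) for real numbers δ, δ'. Then δ = δ' and there exists a real c > 0 with y = c·x. -/
private lemma pf_pow_nonneg {ι : Type*} [Fintype ι] [DecidableEq ι]
    (A : Matrix ι ι ℝ) (hA : ∀ i j, 0 ≤ A i j) (k : ℕ) :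
    ∀ i j, 0 ≤ (A ^ k) i j := by
  induction k with
  | zero =>
    intro i j
    simp [Matrix.one_apply]
    split <;> norm_num
  | succ n ih =>
    intro i j
    rw [pow_succ, Matrix.mul_apply]
    exact Finset.sum_nonneg fun m _ => mul_nonneg (ih i m) (hA m j)

private lemma pf_le {ι : Type*} [Fintype ι] [DecidableEq ι] [Nonempty ι]
    (A : Matrix ι ι ℝ) (hA : ∀ i j, 0 ≤ A i j)
    (x y : ι → ℝ) (hx : ∀ i, 0 < x i) (hy : ∀ i, 0 < y i)
    (δ δ' : ℝ) (hAx : A.mulVec x = δ • x) (hAy : A.mulVec y = δ' • y) :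
    δ ≤ δ' := by
  obtain ⟨i₀, -, hmin⟩ := Finset.exists_min_image Finset.univ (fun i => y i / x i)
    ⟨Classical.arbitrary ι, Finset.mem_univ _⟩
  set c := y i₀ / x i₀ with hc
  have hcpos : 0 < c := div_pos (hy i₀) (hx i₀)
  have hcx : ∀ j, c * x j ≤ y j := fun j =>
    (le_div_iff₀ (hx j)).mp (hmin j (Finset.mem_univ j))
  have key : δ' * y i₀ ≥ c * (δ * x i₀) := by
    have h1 : (A.mulVec y) i₀ = δ' * y i₀ := by rw [hAy]; simp
    have h2 : (A.mulVec x) i₀ = δ * x i₀ := by rw [hAx]; simp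
    rw [← h1, ← h2, Matrix.mulVec, Matrix.mulVec, dotProduct, dotProduct,
      Finset.mul_sum]
    apply Finset.sum_le_sum
    intro j _
    rw [← mul_assoc, mul_comm c (A i₀ j), mul_assoc]
    exact mul_le_mul_of_nonneg_left (hcx j) (hA i₀ j)
  have : δ * y i₀ ≤ δ' * y i₀ := by
    have : c * (δ * x i₀) = δ * (c * x i₀) := by ring
    rw [this] at key
    have : c * x i₀ = y i₀ := by rw [hc]; exact div_mul_cancel₀ _ (hx i₀).ne'
    rw [this] at key; exact key
  exact le_of_mul_le_mul_right this (hy i₀)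

/-- **Perron–Frobenius uniqueness.** Let `A` be an entrywise nonnegative
irreducible square matrix over `ℝ` (irreducible: for all `i j` some power of `A` has a
positive `(i,j)` entry).  If `x` and `y` are entrywise positive eigenvectors, `A x = δ x`
and `A y = δ' y`, then `δ = δ'` and `y` is a positive scalar multiple of `x`. -/
theorem perron_frobenius_positive_eigenvector_unique
    {ι : Type*} [Fintype ι] [DecidableEq ι] [Nonempty ι] (A : Matrix ι ι ℝ)
    (hA : ∀ i j, 0 ≤ A i j)
    (hirr : ∀ i j, ∃ k : ℕ, 0 < (A ^ k) i j)
    (x y : ι → ℝ) (hx : ∀ i, 0 < x i) (hy : ∀ i, 0 < y i)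
    (δ δ' : ℝ) (hAx : A.mulVec x = δ • x) (hAy : A.mulVec y = δ' • y) :
    δ = δ' ∧ ∃ c : ℝ, 0 < c ∧ y = c • x := by
  have hδδ' : δ = δ' :=
    le_antisymm (pf_le A hA x y hx hy δ δ' hAx hAy) (pf_le A hA y x hy hx δ' δ hAy hAx)
  subst hδδ'
  refine ⟨rfl, ?_⟩
  obtain ⟨i₀, -, hmin⟩ := Finset.exists_min_image Finset.univ (fun i => y i / x i)
    ⟨Classical.arbitrary ι, Finset.mem_univ _⟩
  set c := y i₀ / x i₀ with hc
  have hcpos : 0 < c := div_pos (hy i₀) (hx i₀)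
  have hcx : ∀ j, c * x j ≤ y j := fun j =>
    (le_div_iff₀ (hx j)).mp (hmin j (Finset.mem_univ j))
  set z : ι → ℝ := y - c • x with hz
  have hznn : ∀ j, 0 ≤ z j := fun j => by
    simp [hz, sub_nonneg]
    exact hcx j
  have hzi₀ : z i₀ = 0 := by
    simp [hz]
    rw [hc, div_mul_cancel₀ _ (hx i₀).ne', sub_self]
  have hAz : A.mulVec z = δ • z := by
    rw [hz, Matrix.mulVec_sub, Matrix.mulVec_smul, hAx, hAy]
    ext j
    simp
    ring
  have hAkz : ∀ k : ℕ, (A ^ k).mulVec z = (δ ^ k) • z := by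
    intro k
    induction k with
    | zero => simp [Matrix.one_mulVec]
    | succ n ih =>
      rw [pow_succ', ← Matrix.mulVec_mulVec, ih, Matrix.mulVec_smul, hAz, pow_succ']
      ext j; simp; ring
  have hzzero : ∀ j, z j = 0 := by
    intro j
    by_contra hne
    have hzj : 0 < z j := lt_of_le_of_ne (hznn j) (Ne.symm hne)
    obtain ⟨k, hk⟩ := hirr i₀ j
    have h1 : ((A ^ k).mulVec z) i₀ = 0 := by
      rw [hAkz k]; simp [hzi₀]
    have h2 : 0 < ((A ^ k).mulVec z) i₀ := by
      rw [Matrix.mulVec, dotProduct]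
      apply Finset.sum_pos' (fun m _ => mul_nonneg (pf_pow_nonneg A hA k i₀ m) (hznn m))
      exact ⟨j, Finset.mem_univ j, mul_pos hk hzj⟩
    linarith
  refine ⟨c, hcpos, ?_⟩
  ext j
  have := hzzero j
  simp [hz] at this
  simp only [Pi.smul_apply, smul_eq_mul]
  linarith
end

section
/- Let H be a complex Hilbert space and let φ be a bijective ℂ-algebra homomorphism from the algebra B(H) of bounded linear operators on H to itself satisfying φ(T*) = φ(T)* for all T ∈ B(H). Then there exists a unitary operator U on H such that φ(T) = U T U* for all T ∈ B(H). -/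
open ContinuousLinearMap
open scoped InnerProductSpace

/-- Every bijective `ℂ`-algebra endomorphism of `B(H)` (for `H` a
complex Hilbert space) which preserves the adjoint is implemented by a unitary:
`φ T = U * T * U⋆` for some unitary `U ∈ B(H)`. -/
theorem star_algebra_automorphism_of_bounded_operators_inner
    {H : Type*} [NormedAddCommGroup H] [InnerProductSpace ℂ H] [CompleteSpace H]
    (φ : (H →L[ℂ] H) →ₐ[ℂ] (H →L[ℂ] H))
    (hbij : Function.Bijective φ)
    (hstar : ∀ T : H →L[ℂ] H, φ (star T) = star (φ T)) :
    ∃ U : H →L[ℂ] H, U ∈ unitary (H →L[ℂ] H) ∧ ∀ T : H →L[ℂ] H, φ T = U * T * star U := by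
  rcases subsingleton_or_nontrivial H with h | h
  · refine ⟨1, Unitary.mem_iff.2 ⟨by simp, by simp⟩, fun T => ?_⟩
    ext x
    exact Subsingleton.elim _ _
  obtain ⟨w, hw⟩ := exists_ne (0 : H)
  set ξ : H := ‖w‖⁻¹ • w with hξdef
  have hξ : ‖ξ‖ = 1 := by
    rw [hξdef, norm_smul, norm_inv, norm_norm, inv_mul_cancel₀ (norm_ne_zero_iff.2 hw)]
  have hξξ : ⟪ξ, ξ⟫_ℂ = 1 := by
    rw [inner_self_eq_norm_sq_to_K, hξ]; norm_num
  set R : H → (H →L[ℂ] H) := fun x => (innerSL ℂ ξ).smulRight x with hR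
  have hRapp : ∀ x v, R x v = ⟪ξ, v⟫_ℂ • x := fun x v => rfl
  set p : H →L[ℂ] H := R ξ with hp
  have hpp : p * p = p := by
    ext v
    simp [hp, mul_apply, hRapp, inner_smul_right, hξξ, hξ, smul_smul]
  have hpstar : star p = p := by
    rw [star_eq_adjoint]
    refine ((ContinuousLinearMap.eq_adjoint_iff p p).2 fun x y => ?_).symm
    simp only [hRapp, hp, inner_smul_left, inner_smul_right, inner_conj_symm]
    ring
  have hξne : ξ ≠ 0 := by
    intro h0
    rw [h0, norm_zero] at hξ
    norm_num at hξ
  have hpne : p ≠ 0 := by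
    intro h0
    have hpξ : p ξ = ξ := by simp [hp, hRapp, hξξ, hξ]
    rw [h0] at hpξ
    simp only [ContinuousLinearMap.zero_apply] at hpξ
    exact hξne hpξ.symm
  have hφpne : φ p ≠ 0 := by
    intro h0
    exact hpne (hbij.injective (by simpa using h0))
  obtain ⟨v, hv⟩ : ∃ v, φ p v ≠ 0 := by
    by_contra hc
    push_neg at hc
    exact hφpne (ContinuousLinearMap.ext fun v => by simpa using hc v)
  set η : H := ((‖φ p v‖⁻¹ : ℝ) : ℂ) • φ p v with hηdef
  have hη1 : ‖η‖ = 1 := by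
    rw [hηdef, norm_smul]
    simp [inv_mul_cancel₀ (norm_ne_zero_iff.2 hv)]
  have hηη : ⟪η, η⟫_ℂ = 1 := by
    rw [inner_self_eq_norm_sq_to_K, hη1]; norm_num
  have hφpp : φ p * φ p = φ p := by rw [← map_mul, hpp]
  have hη : φ p η = η := by
    rw [hηdef, map_smul]
    congr 1
    calc φ p (φ p v) = (φ p * φ p) v := rfl
      _ = φ p v := by rw [hφpp]
  have hφpsa : star (φ p) = φ p := by rw [← hstar, hpstar]
  have key : ∀ S T : H →L[ℂ] H, ⟪φ S η, φ T η⟫_ℂ = ⟪S ξ, T ξ⟫_ℂ := by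
    intro S T
    have hST : ⟪ξ, (star S * T) ξ⟫_ℂ = ⟪S ξ, T ξ⟫_ℂ := by
      rw [mul_apply_eq_comp, star_eq_adjoint, adjoint_inner_right]
    have h1 : p * (star S * T) * p = (⟪S ξ, T ξ⟫_ℂ) • p := by
      ext u
      simp only [mul_apply_eq_comp, smul_apply, hRapp, hp, inner_smul_right, map_smul, smul_smul]
      rw [← hST]
      rw [mul_apply_eq_comp]
      ring_nf
    have h2 : φ p * φ (star S * T) * φ p = (⟪S ξ, T ξ⟫_ℂ) • φ p := by
      rw [← map_mul, ← map_mul, h1, map_smul]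
    calc ⟪φ S η, φ T η⟫_ℂ = ⟪η, (adjoint (φ S)) (φ T η)⟫_ℂ := by
          rw [adjoint_inner_right]
      _ = ⟪η, φ (star S * T) η⟫_ℂ := by
          rw [← star_eq_adjoint, ← hstar, map_mul, mul_apply_eq_comp]
      _ = ⟪φ p η, φ (star S * T) (φ p η)⟫_ℂ := by rw [hη]
      _ = ⟪η, (φ p * φ (star S * T) * φ p) η⟫_ℂ := by
          have hselfad : ∀ (a b : H), ⟪φ p a, b⟫_ℂ = ⟪a, φ p b⟫_ℂ := fun a b => by
            conv_lhs => rw [← hφpsa]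
            rw [star_eq_adjoint, adjoint_inner_left]
          rw [show (φ p * φ (star S * T) * φ p) η = φ p (φ (star S * T) (φ p η)) from rfl]
          exact hselfad _ _
      _ = ⟪S ξ, T ξ⟫_ℂ := by
          rw [h2]
          simp [inner_smul_right, hη, hηη, hη1]
  have hRadd : ∀ x y, R (x + y) = R x + R y := by
    intro x y; ext u; simp [hRapp, smul_add]
  have hRsmul : ∀ (c : ℂ) x, R (c • x) = c • R x := by
    intro c x; ext u; simp [hRapp, smul_smul, mul_comm]
  set U₀ : H →ₗ[ℂ] H :=
    { toFun := fun x => φ (R x) η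
      map_add' := fun x y => by
        show φ (R (x + y)) η = φ (R x) η + φ (R y) η
        rw [hRadd, map_add, add_apply]
      map_smul' := fun c x => by
        show φ (R (c • x)) η = c • φ (R x) η
        rw [hRsmul, show φ (c • R x) = c • φ (R x) from map_smul φ.toLinearMap c (R x),
          smul_apply] } with hU₀
  have hU₀app : ∀ x, U₀ x = φ (R x) η := fun x => rfl
  have hinner : ∀ x y, ⟪U₀ x, U₀ y⟫_ℂ = ⟪x, y⟫_ℂ := by
    intro x y
    rw [hU₀app, hU₀app, key]
    simp [hRapp, hξξ, hξ]
  set e : H →ₗᵢ[ℂ] H := U₀.isometryOfInner hinner with he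
  have heapp : ∀ x, e x = U₀ x := fun x => rfl
  set U : H →L[ℂ] H := e.toContinuousLinearMap with hU
  have hUapp : ∀ x, U x = φ (R x) η := fun x => rfl
  have hsurj : Function.Surjective U := by
    intro z
    obtain ⟨S, hS⟩ := hbij.surjective ((innerSL ℂ η).smulRight z)
    refine ⟨S ξ, ?_⟩
    have hRS : R (S ξ) = S * p := by
      ext u
      simp [hRapp, hp, mul_apply, map_smul]
    rw [hUapp, hRS, map_mul, mul_apply_eq_comp, hη, hS]
    show ⟪η, η⟫_ℂ • z = z
    rw [hηη, one_smul]
  have hUinner : ∀ x y, ⟪U x, U y⟫_ℂ = ⟪x, y⟫_ℂ := hinner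
  have h1 : star U * U = 1 := by
    ext x
    apply ext_inner_left ℂ
    intro u
    rw [mul_apply_eq_comp, star_eq_adjoint, adjoint_inner_right, hUinner]
    simp
  have h2 : U * star U = 1 := by
    ext x
    obtain ⟨z, hz⟩ := hsurj x
    calc (U * star U) x = U ((star U * U) z) := by rw [← hz]; rfl
      _ = U z := by rw [h1]; rfl
      _ = x := hz
  refine ⟨U, Unitary.mem_iff.2 ⟨h1, h2⟩, fun T => ?_⟩
  have hcomm : φ T * U = U * T := by
    ext x
    have hTR : T * R x = R (T x) := by
      ext u; simp [hRapp, mul_apply, map_smul]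
    calc (φ T * U) x = φ T (φ (R x) η) := by rw [mul_apply_eq_comp, hUapp]
      _ = φ (T * R x) η := by rw [map_mul, mul_apply_eq_comp]
      _ = φ (R (T x)) η := by rw [hTR]
      _ = U (T x) := (hUapp _).symm
      _ = (U * T) x := rfl
  calc φ T = φ T * (U * star U) := by rw [h2, mul_one]
    _ = (φ T * U) * star U := by rw [mul_assoc]
    _ = U * T * star U := by rw [hcomm]
end
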